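/- L² lower bound (Riesz system): assume additionally that f is not m-a.e. equal to an indicator function, and set c_f := √(∫_𝕋 f(1−f) dm) > 0. Then for every finitely supported complex sequence (a_n)_{n∈ℤ}, ‖ ∑_{n∈ℤ} a_n (ξ_n − σ) ‖_{L²(ℙ)} ≥ c_f (∑_{n∈ℤ} |a_n|²)^{1/2}. -/

import Mathlib

open MeasureTheory Complex Filter Finset
open scoped ENNReal

noncomputable def fhat (f : AddCircle (1:ℝ) → ℝ) (k : ℤ) : ℂ :=
  fourierCoeff (fun t => (f t : ℂ)) k

private lemma integrable_of_bdd {Ω : Type*} [MeasurableSpace Ω] {P : Measure Ω}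
    [IsFiniteMeasure P] {g : Ω → ℝ} (hm : Measurable g) (C : ℝ)
    (hb : ∀ ω, ‖g ω‖ ≤ C) : Integrable g P :=
  ⟨hm.aestronglyMeasurable, HasFiniteIntegral.of_bounded (ae_of_all _ hb)⟩

/-- Riesz lower bound: if f is not a.e. an indicator, then
‖∑ a_n (ξ_n − σ)‖_{L²} ≥ c_f (∑|a_n|²)^{1/2} with c_f = √(∫ f(1−f)). -/
theorem stmt_11
    (f : AddCircle (1:ℝ) → ℝ) (hf_meas : Measurable f)
    (hf01 : ∀ t, f t ∈ Set.Icc (0:ℝ) 1)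
    (σ : ℝ) (hσ : σ = ∫ t, f t ∂AddCircle.haarAddCircle)
    (hσ0 : 0 < σ) (hσ1 : σ < 1)
    {Ω : Type*} [MeasurableSpace Ω] (P : Measure Ω) [IsProbabilityMeasure P]
    (ξ : ℤ → Ω → ℝ) (hξ_meas : ∀ n, Measurable (ξ n))
    (hξ01 : ∀ n ω, ξ n ω = 0 ∨ ξ n ω = 1)
    (hDPP : ∀ (k : ℕ) (n : Fin k → ℤ), Function.Injective n →
      ((∫ ω, ∏ i, ξ (n i) ω ∂P : ℝ) : ℂ) =
        Matrix.det (Matrix.of fun i j => fhat f (n i - n j)))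
    (hind : 0 < ∫ t, f t * (1 - f t) ∂AddCircle.haarAddCircle) :
    ∀ a : ℤ →₀ ℂ,
      ENNReal.ofReal (Real.sqrt (∫ t, f t * (1 - f t) ∂AddCircle.haarAddCircle) *
          Real.sqrt (∑ n ∈ a.support, ‖a n‖^2)) ≤
        eLpNorm (fun ω => ∑ n ∈ a.support, a n * ((ξ n ω : ℂ) - (σ:ℂ))) 2 P := by
  intro a
  classical
  set s : Finset ℤ := a.support with hs
  set A : ℝ := ∑ n ∈ s, ‖a n‖^2 with hA
  set I : ℝ := ∫ t, f t * (1 - f t) ∂AddCircle.haarAddCircle with hI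
  have hA0 : 0 ≤ A := Finset.sum_nonneg fun n _ => by positivity
  -- basic bounds on f
  have hf_bd : ∀ t, ‖f t‖ ≤ 1 := by
    intro t
    rw [Real.norm_eq_abs, abs_le]
    exact ⟨by linarith [(hf01 t).1], (hf01 t).2⟩
  have hInt_f : Integrable f AddCircle.haarAddCircle := integrable_of_bdd hf_meas 1 hf_bd
  have hInt_f2 : Integrable (fun t => f t * f t) AddCircle.haarAddCircle := by
    refine integrable_of_bdd (hf_meas.mul hf_meas) 1 fun t => ?_
    rw [norm_mul]
    exact mul_le_one₀ (hf_bd t) (norm_nonneg _) (hf_bd t)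
  set S : ℝ := ∫ t, f t * f t ∂AddCircle.haarAddCircle with hSdef
  have hS : I = σ - S := by
    rw [hI, hσ, hSdef, ← integral_sub hInt_f hInt_f2]
    congr 1
    funext t
    ring
  -- fhat facts
  have hfhat0 : fhat f 0 = (σ : ℂ) := by
    rw [fhat, fourierCoeff]
    simp only [neg_zero, fourier_zero, one_smul]
    rw [hσ]
    exact integral_ofReal
  have hfhat_conj : ∀ k : ℤ, fhat f (-k) = (starRingEnd ℂ) (fhat f k) := by
    intro k
    rw [fhat, fhat, fourierCoeff, fourierCoeff, ← integral_conj]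
    congr 1
    funext t
    rw [smul_eq_mul, smul_eq_mul, map_mul, Complex.conj_ofReal, neg_neg]
    congr 1
    rw [← neg_neg k, fourier_neg, neg_neg]
  -- Parseval
  have hmem : MemLp (fun t => ((f t : ℂ))) 2 AddCircle.haarAddCircle := by
    refine MemLp.of_bound ((Complex.measurable_ofReal.comp hf_meas).aestronglyMeasurable) 1
      (ae_of_all _ fun t => ?_)
    rw [Complex.norm_real]
    exact hf_bd t
  set F : Lp ℂ 2 AddCircle.haarAddCircle := hmem.toLp _ with hF
  have hFcoeff : ∀ k : ℤ, fourierCoeff (F : AddCircle (1:ℝ) → ℂ) k = fhat f k := by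
    intro k
    rw [fhat, fourierCoeff, fourierCoeff]
    apply integral_congr_ae
    filter_upwards [hmem.coeFn_toLp] with t ht
    rw [ht]
  have hsumm : Summable (fun k : ℤ => Complex.normSq (fhat f k)) := by
    have h := (lp.memℓp (fourierBasis.repr F)).summable
      (by norm_num : (0:ℝ) < (2:ℝ≥0∞).toReal)
    have h2 : (fun i : ℤ => ‖fourierBasis.repr F i‖ ^ (2:ℝ≥0∞).toReal)
        = fun k : ℤ => Complex.normSq (fhat f k) := by
      funext k
      rw [fourierBasis_repr, hFcoeff, Complex.normSq_eq_norm_sq, ENNReal.toReal_ofNat,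
        show ((2:ℝ) = ((2:ℕ):ℝ)) by norm_num, Real.rpow_natCast]
    rwa [h2] at h
  have hparseval : ∑' k : ℤ, Complex.normSq (fhat f k) = S := by
    have h := tsum_sq_fourierCoeff F
    have h1 : ∀ k : ℤ, ‖fourierCoeff (F : AddCircle (1:ℝ) → ℂ) k‖ ^ 2
        = Complex.normSq (fhat f k) := by
      intro k
      rw [hFcoeff, Complex.normSq_eq_norm_sq]
    have h2 : ∫ t, ‖(F : AddCircle (1:ℝ) → ℂ) t‖ ^ 2 ∂AddCircle.haarAddCircle = S := by
      have h3 : ∫ t, ‖(F : AddCircle (1:ℝ) → ℂ) t‖ ^ 2 ∂AddCircle.haarAddCircle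
          = ∫ t, f t * f t ∂AddCircle.haarAddCircle := by
        apply integral_congr_ae
        filter_upwards [hmem.coeFn_toLp] with t ht
        rw [ht, Complex.norm_real, Real.norm_eq_abs, _root_.sq_abs, sq]
      rw [h3, hSdef]
    rw [← h2, ← h]
    exact (tsum_congr h1).symm
  have hfin_sum : ∀ (t : Finset ℤ), ∑ k ∈ t, Complex.normSq (fhat f k) ≤ S := by
    intro t
    rw [← hparseval]
    exact Summable.sum_le_tsum t (fun k _ => Complex.normSq_nonneg _) hsumm
  -- probability side
  have hξ_bd : ∀ n ω, ‖ξ n ω‖ ≤ 1 := by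
    intro n ω
    rcases hξ01 n ω with h | h <;> simp [h]
  have hint_ξ : ∀ n, Integrable (ξ n) P := fun n =>
    integrable_of_bdd (hξ_meas n) 1 (hξ_bd n)
  have hint_ξξ : ∀ n m, Integrable (fun ω => ξ n ω * ξ m ω) P := by
    intro n m
    refine integrable_of_bdd ((hξ_meas n).mul (hξ_meas m)) 1 fun ω => ?_
    rw [norm_mul]
    exact mul_le_one₀ (hξ_bd n ω) (norm_nonneg _) (hξ_bd m ω)
  have hE1 : ∀ n : ℤ, ∫ ω, ξ n ω ∂P = σ := by
    intro n
    have h := hDPP 1 (fun _ => n) (Function.injective_of_subsingleton _)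
    simp only [Fin.prod_univ_one, Matrix.det_fin_one, Matrix.of_apply, sub_self, hfhat0] at h
    exact_mod_cast h
  have hE2 : ∀ n m : ℤ, n ≠ m →
      ∫ ω, ξ n ω * ξ m ω ∂P = σ * σ - Complex.normSq (fhat f (n - m)) := by
    intro n m hnm
    have hinj : Function.Injective ![n, m] := by
      intro i j hij
      fin_cases i <;> fin_cases j <;> simp_all
    have h := hDPP 2 ![n, m] hinj
    simp only [Fin.prod_univ_two, Matrix.det_fin_two, Matrix.of_apply, Matrix.cons_val_zero,
      Matrix.cons_val_one, Matrix.head_cons, sub_self, hfhat0] at h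
    have hc : fhat f (m - n) = (starRingEnd ℂ) (fhat f (n - m)) := by
      rw [show m - n = -(n - m) by ring, hfhat_conj]
    rw [hc, Complex.mul_conj] at h
    have h2 : ((∫ ω, ξ n ω * ξ m ω ∂P : ℝ) : ℂ)
        = ((σ * σ - Complex.normSq (fhat f (n - m)) : ℝ) : ℂ) := by
      rw [h]; push_cast; ring
    exact_mod_cast h2
  have hint_y : ∀ n m : ℤ, Integrable (fun ω => (ξ n ω - σ) * (ξ m ω - σ)) P := by
    intro n m
    have hb : ∀ k ω, ‖ξ k ω - σ‖ ≤ 1 + σ := by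
      intro k ω
      refine (norm_sub_le _ _).trans ?_
      have h1 := hξ_bd k ω
      have h2 : ‖σ‖ = σ := by rw [Real.norm_eq_abs, abs_of_pos hσ0]
      linarith
    refine integrable_of_bdd (((hξ_meas n).sub measurable_const).mul
      ((hξ_meas m).sub measurable_const)) ((1 + σ) * (1 + σ)) fun ω => ?_
    rw [norm_mul]
    exact mul_le_mul (hb n ω) (hb m ω) (norm_nonneg _) (by positivity)
  -- covariance computation
  have hT : ∀ n m : ℤ, ∫ ω, (ξ n ω - σ) * (ξ m ω - σ) ∂P
      = (if n = m then σ else 0) - Complex.normSq (fhat f (n - m)) := by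
    intro n m
    have hre : (fun ω => (ξ n ω - σ) * (ξ m ω - σ))
        = fun ω => ξ n ω * ξ m ω - σ * ξ n ω - σ * ξ m ω + σ * σ := by
      funext ω; ring
    have i1 := hint_ξξ n m
    have i2 : Integrable (fun ω => σ * ξ n ω) P := (hint_ξ n).const_mul σ
    have i3 : Integrable (fun ω => σ * ξ m ω) P := (hint_ξ m).const_mul σ
    have i12 : Integrable (fun ω => ξ n ω * ξ m ω - σ * ξ n ω) P := i1.sub i2
    have i123 : Integrable (fun ω => ξ n ω * ξ m ω - σ * ξ n ω - σ * ξ m ω) P := i12.sub i3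
    rw [hre, integral_add i123 (integrable_const _),
      integral_sub i12 i3, integral_sub i1 i2,
      integral_const_mul, integral_const_mul, integral_const, hE1, hE1]
    simp only [measure_univ, probReal_univ, ENNReal.toReal_one, one_smul]
    rcases eq_or_ne n m with rfl | hnm
    · have hxx : (fun ω => ξ n ω * ξ n ω) = ξ n := by
        funext ω
        rcases hξ01 n ω with h | h <;> simp [h]
      rw [hxx, hE1, if_pos rfl, sub_self, hfhat0]
      rw [show Complex.normSq ((σ:ℝ):ℂ) = σ * σ from Complex.normSq_ofReal σ]
      ring
    · rw [hE2 n m hnm, if_neg hnm]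
      ring
  -- expand the squared norm pointwise
  set X : Ω → ℂ := fun ω => ∑ n ∈ s, a n * ((ξ n ω : ℂ) - (σ:ℂ)) with hX
  have hXmul : ∀ ω, ‖X ω‖^2
      = ∑ n ∈ s, ∑ m ∈ s, (a n * (starRingEnd ℂ) (a m)).re * ((ξ n ω - σ) * (ξ m ω - σ)) := by
    intro ω
    have h1 : (‖X ω‖^2 : ℝ) = (X ω * (starRingEnd ℂ) (X ω)).re := by
      rw [Complex.mul_conj, Complex.ofReal_re, Complex.normSq_eq_norm_sq]
    rw [h1, hX]
    rw [map_sum, Finset.sum_mul_sum, Complex.re_sum]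
    refine Finset.sum_congr rfl fun n _ => ?_
    rw [Complex.re_sum]
    refine Finset.sum_congr rfl fun m _ => ?_
    have h2 : (a n * ((ξ n ω : ℂ) - (σ:ℂ))) * (starRingEnd ℂ) (a m * ((ξ m ω : ℂ) - (σ:ℂ)))
        = (a n * (starRingEnd ℂ) (a m)) * ((((ξ n ω - σ) * (ξ m ω - σ) : ℝ)) : ℂ) := by
      rw [map_mul]
      have hc : (starRingEnd ℂ) ((ξ m ω : ℂ) - (σ:ℂ)) = ((ξ m ω : ℂ) - (σ:ℂ)) := by
        rw [← Complex.ofReal_sub, Complex.conj_ofReal, Complex.ofReal_sub]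
      rw [hc]
      push_cast
      ring
    rw [h2, Complex.mul_re, Complex.ofReal_re, Complex.ofReal_im, mul_zero, sub_zero]
  -- the variance identity
  have hV : ∫ ω, ‖X ω‖^2 ∂P = ∑ n ∈ s, ∑ m ∈ s, (a n * (starRingEnd ℂ) (a m)).re *
      ((if n = m then σ else 0) - Complex.normSq (fhat f (n - m))) := by
    have := integral_congr_ae (ae_of_all P hXmul)
    rw [this, integral_finset_sum s (fun n _ =>
      integrable_finset_sum s (fun m _ => (hint_y n m).const_mul _))]
    refine Finset.sum_congr rfl fun n _ => ?_
    rw [integral_finset_sum s (fun m _ => (hint_y n m).const_mul _)]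
    refine Finset.sum_congr rfl fun m _ => ?_
    rw [integral_const_mul, hT]
  -- split diagonal and error term
  set R : ℝ := ∑ n ∈ s, ∑ m ∈ s,
      (a n * (starRingEnd ℂ) (a m)).re * Complex.normSq (fhat f (n - m)) with hR
  have hdiagsum : ∑ n ∈ s, ∑ m ∈ s,
      (a n * (starRingEnd ℂ) (a m)).re * (if n = m then σ else 0) = σ * A := by
    have e : ∀ n ∈ s, ∑ m ∈ s,
        (a n * (starRingEnd ℂ) (a m)).re * (if n = m then σ else 0) = ‖a n‖^2 * σ := by
      intro n hn
      have e2 : ∀ m ∈ s, (a n * (starRingEnd ℂ) (a m)).re * (if n = m then σ else 0)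
          = if n = m then (a n * (starRingEnd ℂ) (a m)).re * σ else 0 := by
        intro m _
        split <;> simp
      rw [Finset.sum_congr rfl e2, Finset.sum_ite_eq s n
        (fun m => (a n * (starRingEnd ℂ) (a m)).re * σ), if_pos hn, Complex.mul_conj,
        Complex.ofReal_re, Complex.normSq_eq_norm_sq]
    rw [Finset.sum_congr rfl e, ← Finset.sum_mul, hA, mul_comm]
  have hVsplit : ∫ ω, ‖X ω‖^2 ∂P = σ * A - R := by
    rw [hV]
    simp_rw [mul_sub]
    rw [Finset.sum_congr rfl (fun n _ => Finset.sum_sub_distrib _ _),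
      Finset.sum_sub_distrib, hdiagsum, hR]
  -- bound the error term
  have hcol : ∀ n : ℤ, ∑ m ∈ s, Complex.normSq (fhat f (n - m)) ≤ S := by
    intro n
    have := hfin_sum (s.image (fun m => n - m))
    rwa [Finset.sum_image (by intro x _ y _ h; simp only at h; omega)] at this
  have hrow : ∀ m : ℤ, ∑ n ∈ s, Complex.normSq (fhat f (n - m)) ≤ S := by
    intro m
    have := hfin_sum (s.image (fun n => n - m))
    rwa [Finset.sum_image (by intro x _ y _ h; simp only at h; omega)] at this
  have hRle : R ≤ S * A := by
    have step1 : R ≤ ∑ n ∈ s, ∑ m ∈ s,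
        (‖a n‖^2 * Complex.normSq (fhat f (n - m))
          + ‖a m‖^2 * Complex.normSq (fhat f (n - m))) / 2 := by
      rw [hR]
      refine Finset.sum_le_sum fun n _ => Finset.sum_le_sum fun m _ => ?_
      have h1 : (a n * (starRingEnd ℂ) (a m)).re ≤ (‖a n‖^2 + ‖a m‖^2) / 2 := by
        have h2 : (a n * (starRingEnd ℂ) (a m)).re ≤ ‖a n * (starRingEnd ℂ) (a m)‖ := by
          exact Complex.re_le_norm _
        have h3 : ‖a n * (starRingEnd ℂ) (a m)‖ = ‖a n‖ * ‖a m‖ := by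
          rw [norm_mul, RCLike.norm_conj]
        nlinarith [sq_nonneg (‖a n‖ - ‖a m‖)]
      have h4 := Complex.normSq_nonneg (fhat f (n - m))
      nlinarith
    have step2 : ∑ n ∈ s, ∑ m ∈ s,
        (‖a n‖^2 * Complex.normSq (fhat f (n - m))
          + ‖a m‖^2 * Complex.normSq (fhat f (n - m))) / 2
        ≤ (A * S + A * S) / 2 := by
      have e1 : ∑ n ∈ s, ∑ m ∈ s, ‖a n‖^2 * Complex.normSq (fhat f (n - m)) ≤ A * S := by
        rw [hA, Finset.sum_mul]
        refine Finset.sum_le_sum fun n _ => ?_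
        rw [← Finset.mul_sum]
        exact mul_le_mul_of_nonneg_left (hcol n) (by positivity)
      have e2 : ∑ n ∈ s, ∑ m ∈ s, ‖a m‖^2 * Complex.normSq (fhat f (n - m)) ≤ A * S := by
        rw [Finset.sum_comm, hA, Finset.sum_mul]
        refine Finset.sum_le_sum fun m _ => ?_
        rw [← Finset.mul_sum]
        exact mul_le_mul_of_nonneg_left (hrow m) (by positivity)
      have e3 : ∑ n ∈ s, ∑ m ∈ s,
          (‖a n‖^2 * Complex.normSq (fhat f (n - m))
            + ‖a m‖^2 * Complex.normSq (fhat f (n - m))) / 2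
          = (∑ n ∈ s, ∑ m ∈ s, ‖a n‖^2 * Complex.normSq (fhat f (n - m))
            + ∑ n ∈ s, ∑ m ∈ s, ‖a m‖^2 * Complex.normSq (fhat f (n - m))) / 2 := by
        simp_rw [← Finset.sum_div, Finset.sum_add_distrib]
      rw [e3]
      linarith
    calc R ≤ _ := step1
      _ ≤ (A * S + A * S) / 2 := step2
      _ = S * A := by ring
  -- lower bound on the variance
  have hVlb : I * A ≤ ∫ ω, ‖X ω‖^2 ∂P := by
    rw [hVsplit, hS]
    nlinarith
  -- conclude via eLpNorm
  have hmemX : MemLp X 2 P := by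
    refine MemLp.of_bound ?_ (∑ n ∈ s, ‖a n‖ * (1 + σ)) (ae_of_all _ fun ω => ?_)
    · refine (Finset.measurable_sum s fun n _ => ?_).aestronglyMeasurable
      exact ((Complex.measurable_ofReal.comp (hξ_meas n)).sub measurable_const).const_mul (a n)
    · refine (norm_sum_le _ _).trans (Finset.sum_le_sum fun n _ => ?_)
      rw [norm_mul]
      refine mul_le_mul_of_nonneg_left ?_ (norm_nonneg _)
      refine (norm_sub_le _ _).trans ?_
      rw [Complex.norm_real, Complex.norm_real, Real.norm_eq_abs σ, abs_of_pos hσ0]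
      have := hξ_bd n ω
      linarith
  have heq : eLpNorm X 2 P = ENNReal.ofReal (Real.sqrt (∫ ω, ‖X ω‖^2 ∂P)) := by
    rw [hmemX.eLpNorm_eq_integral_rpow_norm (by norm_num) (by norm_num)]
    have h1 : ((2:ℝ≥0∞)).toReal = (2:ℝ) := by norm_num
    rw [h1]
    have h2 : ∫ ω, ‖X ω‖ ^ (2:ℝ) ∂P = ∫ ω, ‖X ω‖^2 ∂P := by
      apply integral_congr_ae
      filter_upwards with ω
      rw [show (2:ℝ) = ((2:ℕ):ℝ) by norm_num, Real.rpow_natCast]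
    rw [h2, Real.sqrt_eq_rpow]
    norm_num
  rw [heq]
  apply ENNReal.ofReal_le_ofReal
  rw [← Real.sqrt_mul (le_of_lt hind)]
  exact Real.sqrt_le_sqrt hVlb
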